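/- As n → ∞, √n·d_n(𝔽_n, F) − √n·d(𝔽_n, F) → 0 in probability; that is, for every δ > 0, P(|√n·d_n(𝔽_n, F) − √n·d(𝔽_n, F)| > δ) → 0. (This is the key step in proving that the CDF of √n·d_n(𝔽_n, F) and the CDF of the Cramér–von Mises statistic √n·d(𝔽_n, F) converge to each other uniformly.) -/

import Mathlib

open Filter Topology MeasureTheory ProbabilityTheory

/-- A cumulative distribution function: non-decreasing, right-continuous,
tending to 0 at -∞ and to 1 at +∞. -/
def IsCDF (G : ℝ → ℝ) : Prop :=
  Monotone G ∧ (∀ x : ℝ, ContinuousWithinAt G (Set.Ici x) x) ∧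
    Tendsto G atBot (𝓝 0) ∧ Tendsto G atTop (𝓝 1)

/-- The identifiable mixing proportion α₀. -/
noncomputable def alpha0 (F Fb : ℝ → ℝ) : ℝ :=
  sInf {γ : ℝ | γ ∈ Set.Ioc (0 : ℝ) 1 ∧
    IsCDF (fun x => (F x - (1 - γ) * Fb x) / γ)}

variable {Ω : Type*} [MeasurableSpace Ω]

/-- The empirical CDF of the first n observations X₁(ω), …, Xₙ(ω). -/
noncomputable def empCDF (X : ℕ → Ω → ℝ) (n : ℕ) (ω : Ω) (x : ℝ) : ℝ :=
  (n : ℝ)⁻¹ * ∑ i ∈ Finset.range n, if X i ω ≤ x then (1 : ℝ) else 0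

/-- The empirical L₂ distance dₙ(g,h) between two functions, based on the data
X₁(ω), …, Xₙ(ω). -/
noncomputable def empDist (X : ℕ → Ω → ℝ) (n : ℕ) (ω : Ω) (g h : ℝ → ℝ) : ℝ :=
  Real.sqrt ((n : ℝ)⁻¹ * ∑ i ∈ Finset.range n, (g (X i ω) - h (X i ω)) ^ 2)

/-- The criterion function Cₙ(γ) = γ dₙ(F̂ₛₙᵞ, F̌ₛₙᵞ)
  = inf over CDFs W of dₙ(𝔽ₙ, γW + (1−γ)F_b), with Cₙ(0) = dₙ(𝔽ₙ, F_b). -/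
noncomputable def critFn (Fb : ℝ → ℝ) (X : ℕ → Ω → ℝ) (n : ℕ) (γ : ℝ) (ω : Ω) : ℝ :=
  if γ = 0 then empDist X n ω (empCDF X n ω) Fb
  else sInf {v : ℝ | ∃ W : ℝ → ℝ, IsCDF W ∧
    v = empDist X n ω (empCDF X n ω) (fun x => γ * W x + (1 - γ) * Fb x)}

/-- The estimator α̂ₙ = inf{γ ∈ [0,1] : √n Cₙ(γ) ≤ cₙ}. -/
noncomputable def hatAlpha (Fb : ℝ → ℝ) (X : ℕ → Ω → ℝ) (cn : ℝ) (n : ℕ) (ω : Ω) : ℝ :=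
  sInf {γ : ℝ | γ ∈ Set.Icc (0 : ℝ) 1 ∧ Real.sqrt n * critFn Fb X n γ ω ≤ cn}



open scoped ENNReal

namespace CvM

noncomputable def kerF (F : ℝ → ℝ) (u x : ℝ) : ℝ := (if u ≤ x then (1:ℝ) else 0) - F x

noncomputable def Gf (F : ℝ → ℝ) (μ : MeasureTheory.Measure ℝ) (u v : ℝ) : ℝ :=
  ∫ x, kerF F u x * kerF F v x ∂μ

noncomputable def Af (F : ℝ → ℝ) (μ : MeasureTheory.Measure ℝ) (X : ℕ → Ω → ℝ) (i j k : ℕ)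
    (ω : Ω) : ℝ :=
  kerF F (X i ω) (X k ω) * kerF F (X j ω) (X k ω) - Gf F μ (X i ω) (X j ω)

noncomputable def Sn (F : ℝ → ℝ) (μ : MeasureTheory.Measure ℝ) (X : ℕ → Ω → ℝ) (n : ℕ)
    (ω : Ω) : ℝ :=
  ∑ i ∈ Finset.range n, ∑ j ∈ Finset.range n, ∑ k ∈ Finset.range n, Af F μ X i j k ω

def vec (p : (ℕ × ℕ × ℕ) × (ℕ × ℕ × ℕ)) : Fin 6 → ℕ :=
  ![p.1.1, p.1.2.1, p.1.2.2, p.2.1, p.2.2.1, p.2.2.2]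

def Good (p : (ℕ × ℕ × ℕ) × (ℕ × ℕ × ℕ)) : Prop :=
  ∀ pos : Fin 6, ∃ q, q ≠ pos ∧ vec p q = vec p pos

noncomputable instance : DecidablePred Good := fun _ => Classical.propDecidable _

section Main
variable {F : ℝ → ℝ} {μ : MeasureTheory.Measure ℝ} [MeasureTheory.IsProbabilityMeasure μ]

lemma measurable_kerF (hF : Measurable F) : Measurable (fun p : ℝ × ℝ => kerF F p.1 p.2) := by
  unfold CvM.kerF
  apply Measurable.sub
  · exact Measurable.ite (measurableSet_le measurable_fst measurable_snd) measurable_const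
      measurable_const
  · exact hF.comp measurable_snd

lemma abs_ker_le (h0 : ∀ x, 0 ≤ F x) (h1 : ∀ x, F x ≤ 1) (u x : ℝ) : |kerF F u x| ≤ 1 := by
  unfold CvM.kerF
  rw [abs_le]
  constructor <;> [skip; skip] <;> by_cases h : u ≤ x <;> simp [h] <;> nlinarith [h0 x, h1 x]

lemma integrable_kerker (hF : Measurable F) (h0 : ∀ x, 0 ≤ F x) (h1 : ∀ x, F x ≤ 1) (u v : ℝ) :
    Integrable (fun x => kerF F u x * kerF F v x) μ := by
  apply Integrable.mono' (integrable_const (1:ℝ))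
  · exact (((measurable_kerF hF).comp (measurable_const.prodMk measurable_id)).mul
      ((measurable_kerF hF).comp (measurable_const.prodMk measurable_id))).aestronglyMeasurable
  · refine Filter.Eventually.of_forall fun x => ?_
    rw [Real.norm_eq_abs, abs_mul]
    calc |kerF F u x| * |kerF F v x| ≤ 1 * 1 :=
      mul_le_mul (abs_ker_le h0 h1 u x) (abs_ker_le h0 h1 v x) (abs_nonneg _) zero_le_one
    _ = 1 := one_mul 1

lemma abs_Gf_le (hF : Measurable F) (h0 : ∀ x, 0 ≤ F x) (h1 : ∀ x, F x ≤ 1) (u v : ℝ) :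
    |Gf F μ u v| ≤ 1 := by
  unfold CvM.Gf
  rw [← Real.norm_eq_abs]
  calc ‖∫ x, kerF F u x * kerF F v x ∂μ‖ ≤ 1 * (μ Set.univ).toReal := by
        apply norm_integral_le_of_norm_le_const
        refine Filter.Eventually.of_forall fun x => ?_
        rw [Real.norm_eq_abs, abs_mul]
        calc |kerF F u x| * |kerF F v x| ≤ 1 * 1 :=
          mul_le_mul (abs_ker_le h0 h1 u x) (abs_ker_le h0 h1 v x) (abs_nonneg _) zero_le_one
        _ = 1 := one_mul 1
    _ = 1 := by simp


lemma Gf_symm (u v : ℝ) : Gf F μ u v = Gf F μ v u := by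
  unfold CvM.Gf; congr 1; funext x; ring

lemma measurable_Gf (hF : Measurable F) : Measurable (fun p : ℝ × ℝ => Gf F μ p.1 p.2) := by
  have h : StronglyMeasurable (fun q : (ℝ × ℝ) × ℝ => kerF F q.1.1 q.2 * kerF F q.1.2 q.2) := by
    apply Measurable.stronglyMeasurable
    exact ((measurable_kerF hF).comp ((measurable_fst.comp measurable_fst).prodMk
      measurable_snd)).mul ((measurable_kerF hF).comp ((measurable_snd.comp
      measurable_fst).prodMk measurable_snd))
  exact h.integral_prod_right'.measurable

lemma integral_indicator_Iic (hμ : ∀ x : ℝ, (μ (Set.Iic x)).toReal = F x) (c : ℝ) :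
    ∫ u, (if u ≤ c then (1:ℝ) else 0) ∂μ = F c := by
  have : (fun u => if u ≤ c then (1:ℝ) else 0) = (Set.Iic c).indicator (fun _ => (1:ℝ)) := by
    funext u; simp [Set.indicator_apply, Set.mem_Iic]
  rw [this, integral_indicator measurableSet_Iic, setIntegral_const, smul_eq_mul, mul_one, ← hμ c]; rfl

lemma integral_ker_left (hF : Measurable F) (hμ : ∀ x : ℝ, (μ (Set.Iic x)).toReal = F x) (c : ℝ) :
    ∫ u, kerF F u c ∂μ = 0 := by
  unfold CvM.kerF
  rw [integral_sub _ (integrable_const _)]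
  · rw [integral_indicator_Iic hμ, integral_const]; simp
  · apply Integrable.mono' (integrable_const (1:ℝ))
    · exact (Measurable.ite (measurableSet_le measurable_id measurable_const) measurable_const
        measurable_const).aestronglyMeasurable
    · refine Filter.Eventually.of_forall fun x => ?_
      by_cases h : x ≤ c <;> simp [h]

lemma integral_Gf_left (hF : Measurable F) (h0 : ∀ x, 0 ≤ F x) (h1 : ∀ x, F x ≤ 1)
    (hμ : ∀ x : ℝ, (μ (Set.Iic x)).toReal = F x) (v : ℝ) :
    ∫ u, Gf F μ u v ∂μ = 0 := by
  unfold CvM.Gf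
  have hswap : ∫ u, ∫ x, kerF F u x * kerF F v x ∂μ ∂μ = ∫ x, ∫ u, kerF F u x * kerF F v x ∂μ ∂μ := by
    apply integral_integral_swap
    apply Integrable.mono' (integrable_const (1:ℝ))
    · exact (((measurable_kerF hF).comp (measurable_fst.prodMk measurable_snd)).mul
        ((measurable_kerF hF).comp (measurable_const.prodMk measurable_snd))).aestronglyMeasurable
    · refine Filter.Eventually.of_forall fun p => ?_
      rw [Function.uncurry_apply_pair, Real.norm_eq_abs, abs_mul]
      calc |kerF F p.1 p.2| * |kerF F v p.2| ≤ 1 * 1 :=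
        mul_le_mul (abs_ker_le h0 h1 _ _) (abs_ker_le h0 h1 _ _) (abs_nonneg _) zero_le_one
      _ = 1 := one_mul 1
  rw [hswap]
  have : ∀ x : ℝ, ∫ u, kerF F u x * kerF F v x ∂μ = 0 := by
    intro x
    rw [integral_mul_const, integral_ker_left hF hμ, zero_mul]
  simp [this]

lemma integral_eq_zero_of_indep
    (P : Measure Ω) [IsProbabilityMeasure P]
    (μ : Measure ℝ) [IsProbabilityMeasure μ]
    (X : ℕ → Ω → ℝ) (hmeas : ∀ i, Measurable (X i))
    (hindep : iIndepFun X P)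
    (hdist : ∀ i, Measure.map (X i) P = μ)
    (a : ℕ) (b : Fin 5 → ℕ) (hab : ∀ m, b m ≠ a)
    (Φ : ℝ → (Fin 5 → ℝ) → ℝ) (hΦ : Measurable (fun p : ℝ × (Fin 5 → ℝ) => Φ p.1 p.2))
    (C : ℝ) (hC : ∀ x y, |Φ x y| ≤ C)
    (h0 : ∀ y, ∫ x, Φ x y ∂μ = 0) :
    ∫ ω, Φ (X a ω) (fun m => X (b m) ω) ∂P = 0 := by
  classical
  set Y : Ω → (Fin 5 → ℝ) := fun ω m => X (b m) ω with hYdef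
  have hYmeas : Measurable Y := measurable_pi_lambda _ (fun m => hmeas (b m))
  have hST : Disjoint ({a} : Finset ℕ) (Finset.image b Finset.univ) := by
    simp only [Finset.disjoint_left, Finset.mem_singleton, Finset.mem_image]
    rintro x rfl ⟨m, -, hm⟩
    exact hab m hm
  have h1 := hindep.indepFun_finset {a} (Finset.image b Finset.univ) hST hmeas
  have hIndep : IndepFun (X a) Y P := by
    have ha : a ∈ ({a} : Finset ℕ) := Finset.mem_singleton_self a
    have hb : ∀ m, b m ∈ Finset.image b Finset.univ := fun m =>
      Finset.mem_image_of_mem b (Finset.mem_univ m)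
    have := h1.comp (φ := fun g : ({a} : Finset ℕ) → ℝ => g ⟨a, ha⟩)
      (ψ := fun g : ((Finset.image b Finset.univ : Finset ℕ) : Type) → ℝ => fun m : Fin 5 => g ⟨b m, hb m⟩)
      (_mγ := inferInstance) (_mγ' := inferInstance)
      (measurable_pi_apply _) (measurable_pi_lambda _ fun m => measurable_pi_apply _)
    exact this
  have hmap : P.map (fun ω => (X a ω, Y ω)) = μ.prod (P.map Y) := by
    rw [← hdist a]
    exact (indepFun_iff_map_prod_eq_prod_map_map (hmeas a).aemeasurable
      hYmeas.aemeasurable).mp hIndep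
  haveI : IsProbabilityMeasure (P.map Y) := Measure.isProbabilityMeasure_map hYmeas.aemeasurable
  have hint : Integrable (fun p : ℝ × (Fin 5 → ℝ) => Φ p.1 p.2) (μ.prod (P.map Y)) := by
    apply Integrable.mono' (integrable_const C) hΦ.aestronglyMeasurable
    exact Filter.Eventually.of_forall fun p => by
      simpa [Real.norm_eq_abs] using hC p.1 p.2
  calc ∫ ω, Φ (X a ω) (Y ω) ∂P
      = ∫ p : ℝ × (Fin 5 → ℝ), Φ p.1 p.2 ∂(P.map (fun ω => (X a ω, Y ω))) := by
        rw [integral_map ((hmeas a).prodMk hYmeas).aemeasurable hΦ.aestronglyMeasurable]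
    _ = ∫ p : ℝ × (Fin 5 → ℝ), Φ p.1 p.2 ∂(μ.prod (P.map Y)) := by rw [hmap]
    _ = ∫ y, ∫ x, Φ x y ∂μ ∂(P.map Y) := integral_prod_symm _ hint
    _ = 0 := by simp [h0]


lemma integrable_ker_slice (hF : Measurable F) (h0 : ∀ x, 0 ≤ F x) (h1 : ∀ x, F x ≤ 1) (c : ℝ) :
    Integrable (fun x => kerF F x c) μ := by
  apply Integrable.mono' (integrable_const (1:ℝ))
  · exact ((measurable_kerF hF).comp (measurable_id.prodMk measurable_const)).aestronglyMeasurable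
  · exact Filter.Eventually.of_forall fun x => by
      simpa [Real.norm_eq_abs] using abs_ker_le h0 h1 x c

lemma integrable_Gf_slice (hF : Measurable F) (h0 : ∀ x, 0 ≤ F x) (h1 : ∀ x, F x ≤ 1) (v : ℝ) :
    Integrable (fun x => Gf F μ x v) μ := by
  apply Integrable.mono' (integrable_const (1:ℝ))
  · exact ((measurable_Gf hF).comp (measurable_id.prodMk measurable_const)).aestronglyMeasurable
  · exact Filter.Eventually.of_forall fun x => by
      simpa [Real.norm_eq_abs] using abs_Gf_le hF h0 h1 x v

variable (P : MeasureTheory.Measure Ω) [MeasureTheory.IsProbabilityMeasure P]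

lemma Af_symm (X : ℕ → Ω → ℝ) (i j k : ℕ) (ω : Ω) :
    Af F μ X i j k ω = Af F μ X j i k ω := by
  unfold CvM.Af; rw [Gf_symm]; ring

lemma abs_Af_le (hF : Measurable F) (h0 : ∀ x, 0 ≤ F x) (h1 : ∀ x, F x ≤ 1) (X : ℕ → Ω → ℝ) (i j k : ℕ) (ω : Ω) : |Af F μ X i j k ω| ≤ 2 := by
  unfold CvM.Af
  calc |kerF F (X i ω) (X k ω) * kerF F (X j ω) (X k ω) - Gf F μ (X i ω) (X j ω)|
      ≤ |kerF F (X i ω) (X k ω) * kerF F (X j ω) (X k ω)| + |Gf F μ (X i ω) (X j ω)| :=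
        abs_sub _ _
    _ ≤ 1 + 1 := by
        gcongr
        · rw [abs_mul]
          calc |kerF F (X i ω) (X k ω)| * |kerF F (X j ω) (X k ω)| ≤ 1 * 1 :=
            mul_le_mul (abs_ker_le h0 h1 _ _) (abs_ker_le h0 h1 _ _) (abs_nonneg _) zero_le_one
          _ = 1 := one_mul 1
        · exact abs_Gf_le hF h0 h1 _ _
    _ = 2 := by norm_num

lemma measurable_Af (hF : Measurable F) (X : ℕ → Ω → ℝ) (hmeas : ∀ i, Measurable (X i)) (i j k : ℕ) :
    Measurable (Af F μ X i j k) := by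
  unfold CvM.Af
  exact (((measurable_kerF hF).comp ((hmeas i).prodMk (hmeas k))).mul
    ((measurable_kerF hF).comp ((hmeas j).prodMk (hmeas k)))).sub
    ((measurable_Gf hF).comp ((hmeas i).prodMk (hmeas j)))


lemma abs_factor_le (hF : Measurable F) (h0 : ∀ x, 0 ≤ F x) (h1 : ∀ x, F x ≤ 1) (u v x : ℝ) :
    |kerF F u x * kerF F v x - Gf F μ u v| ≤ 2 := by
  calc |kerF F u x * kerF F v x - Gf F μ u v|
      ≤ |kerF F u x * kerF F v x| + |Gf F μ u v| := abs_sub _ _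
    _ ≤ 1 + 1 := by
        gcongr
        · rw [abs_mul]
          calc |kerF F u x| * |kerF F v x| ≤ 1 * 1 :=
            mul_le_mul (abs_ker_le h0 h1 _ _) (abs_ker_le h0 h1 _ _) (abs_nonneg _) zero_le_one
          _ = 1 := one_mul 1
        · exact abs_Gf_le hF h0 h1 _ _
    _ = 2 := by norm_num

lemma vanish_k (hF : Measurable F) (h0 : ∀ x, 0 ≤ F x) (h1 : ∀ x, F x ≤ 1)
    (X : ℕ → Ω → ℝ) (hmeas : ∀ i, Measurable (X i))
    (hindep : iIndepFun X P)
    (hdist : ∀ i, Measure.map (X i) P = μ)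
    (i j i' j' k' k : ℕ)
    (d1 : k ≠ i) (d2 : k ≠ j) (d3 : k ≠ i') (d4 : k ≠ j') (d5 : k ≠ k') :
    ∫ ω, Af F μ X i j k ω * Af F μ X i' j' k' ω ∂P = 0 := by
  have hy : ∀ m : Fin 5, Measurable (fun p : ℝ × (Fin 5 → ℝ) => p.2 m) :=
    fun m => (measurable_pi_apply m).comp measurable_snd
  have hx : Measurable (fun p : ℝ × (Fin 5 → ℝ) => p.1) := measurable_fst
  have key := integral_eq_zero_of_indep P μ X hmeas hindep hdist k ![i,j,i',j',k']
    (by intro m; fin_cases m <;> simp [d1.symm, d2.symm, d3.symm, d4.symm, d5.symm])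
    (fun x y => (kerF F (y 0) x * kerF F (y 1) x - Gf F μ (y 0) (y 1)) *
      (kerF F (y 2) (y 4) * kerF F (y 3) (y 4) - Gf F μ (y 2) (y 3)))
    (((((measurable_kerF hF).comp ((hy 0).prodMk hx)).mul
        ((measurable_kerF hF).comp ((hy 1).prodMk hx))).sub
        ((measurable_Gf hF).comp ((hy 0).prodMk (hy 1)))).mul
        ((((measurable_kerF hF).comp ((hy 2).prodMk (hy 4))).mul
        ((measurable_kerF hF).comp ((hy 3).prodMk (hy 4)))).sub
        ((measurable_Gf hF).comp ((hy 2).prodMk (hy 3)))))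
    4
    (fun x y => by
      rw [abs_mul]
      calc |kerF F (y 0) x * kerF F (y 1) x - Gf F μ (y 0) (y 1)| *
            |kerF F (y 2) (y 4) * kerF F (y 3) (y 4) - Gf F μ (y 2) (y 3)| ≤ 2 * 2 :=
          mul_le_mul (abs_factor_le hF h0 h1 _ _ _) (abs_factor_le hF h0 h1 _ _ _)
            (abs_nonneg _) (by norm_num)
        _ = 4 := by norm_num)
    (fun y => by
      rw [integral_mul_const, integral_sub (integrable_kerker hF h0 h1 _ _) (integrable_const _),
        integral_const]
      simp [CvM.Gf])
  have heq : (fun ω => Af F μ X i j k ω * Af F μ X i' j' k' ω) =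
      (fun ω => (fun x (y : Fin 5 → ℝ) =>
        (kerF F (y 0) x * kerF F (y 1) x - Gf F μ (y 0) (y 1)) *
        (kerF F (y 2) (y 4) * kerF F (y 3) (y 4) - Gf F μ (y 2) (y 3)))
        (X k ω) (fun m => X ((![i,j,i',j',k'] : Fin 5 → ℕ) m) ω)) := by
    funext ω
    show Af F μ X i j k ω * Af F μ X i' j' k' ω = _
    simp only [Matrix.cons_val_zero, Matrix.cons_val_one, Matrix.head_cons, Matrix.cons_val_two,
      Matrix.tail_cons, Matrix.cons_val_three, Matrix.cons_val_four, Fin.isValue]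
    rfl
  rw [heq]
  exact key

lemma vanish_i (hF : Measurable F) (h0 : ∀ x, 0 ≤ F x) (h1 : ∀ x, F x ≤ 1)
    (hμ : ∀ x : ℝ, (μ (Set.Iic x)).toReal = F x)
    (X : ℕ → Ω → ℝ) (hmeas : ∀ i, Measurable (X i))
    (hindep : iIndepFun X P)
    (hdist : ∀ i, Measure.map (X i) P = μ)
    (j k i' j' k' i : ℕ)
    (d1 : i ≠ j) (d2 : i ≠ k) (d3 : i ≠ i') (d4 : i ≠ j') (d5 : i ≠ k') :
    ∫ ω, Af F μ X i j k ω * Af F μ X i' j' k' ω ∂P = 0 := by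
  have hy : ∀ m : Fin 5, Measurable (fun p : ℝ × (Fin 5 → ℝ) => p.2 m) :=
    fun m => (measurable_pi_apply m).comp measurable_snd
  have hx : Measurable (fun p : ℝ × (Fin 5 → ℝ) => p.1) := measurable_fst
  have key := integral_eq_zero_of_indep P μ X hmeas hindep hdist i ![j,k,i',j',k']
    (by intro m; fin_cases m <;> simp [d1.symm, d2.symm, d3.symm, d4.symm, d5.symm])
    (fun x y => (kerF F x (y 1) * kerF F (y 0) (y 1) - Gf F μ x (y 0)) *
      (kerF F (y 2) (y 4) * kerF F (y 3) (y 4) - Gf F μ (y 2) (y 3)))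
    (((((measurable_kerF hF).comp (hx.prodMk (hy 1))).mul
        ((measurable_kerF hF).comp ((hy 0).prodMk (hy 1)))).sub
        ((measurable_Gf hF).comp (hx.prodMk (hy 0)))).mul
        ((((measurable_kerF hF).comp ((hy 2).prodMk (hy 4))).mul
        ((measurable_kerF hF).comp ((hy 3).prodMk (hy 4)))).sub
        ((measurable_Gf hF).comp ((hy 2).prodMk (hy 3)))))
    4
    (fun x y => by
      rw [abs_mul]
      calc |kerF F x (y 1) * kerF F (y 0) (y 1) - Gf F μ x (y 0)| *
            |kerF F (y 2) (y 4) * kerF F (y 3) (y 4) - Gf F μ (y 2) (y 3)| ≤ 2 * 2 :=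
          mul_le_mul (abs_factor_le hF h0 h1 x (y 0) (y 1)) (abs_factor_le hF h0 h1 _ _ _)
            (abs_nonneg _) (by norm_num)
        _ = 4 := by norm_num)
    (fun y => by
      rw [integral_mul_const]
      have hsub : ∫ x, (kerF F x (y 1) * kerF F (y 0) (y 1) - Gf F μ x (y 0)) ∂μ = 0 := by
        rw [integral_sub ((integrable_ker_slice hF h0 h1 (y 1)).mul_const _)
          (integrable_Gf_slice hF h0 h1 (y 0)), integral_mul_const,
          integral_ker_left hF hμ, integral_Gf_left hF h0 h1 hμ]
        ring
      rw [hsub, zero_mul])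
  have heq : (fun ω => Af F μ X i j k ω * Af F μ X i' j' k' ω) =
      (fun ω => (fun x (y : Fin 5 → ℝ) =>
        (kerF F x (y 1) * kerF F (y 0) (y 1) - Gf F μ x (y 0)) *
        (kerF F (y 2) (y 4) * kerF F (y 3) (y 4) - Gf F μ (y 2) (y 3)))
        (X i ω) (fun m => X ((![j,k,i',j',k'] : Fin 5 → ℕ) m) ω)) := by
    funext ω
    show Af F μ X i j k ω * Af F μ X i' j' k' ω = _
    simp only [Matrix.cons_val_zero, Matrix.cons_val_one, Matrix.head_cons, Matrix.cons_val_two,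
      Matrix.tail_cons, Matrix.cons_val_three, Matrix.cons_val_four, Fin.isValue]
    rfl
  rw [heq]
  exact key

lemma image_card_le_three (v : Fin 6 → ℕ)
    (hGood : ∀ pos : Fin 6, ∃ q, q ≠ pos ∧ v q = v pos) :
    (Finset.univ.image v).card ≤ 3 := by
  classical
  have hcard : (Finset.univ : Finset (Fin 6)).card
      = ∑ a ∈ Finset.univ.image v, (Finset.univ.filter fun q => v q = a).card :=
    Finset.card_eq_sum_card_image v Finset.univ
  have hfib : ∀ a ∈ Finset.univ.image v, 2 ≤ (Finset.univ.filter fun q => v q = a).card := by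
    intro a ha
    obtain ⟨pos, -, hpos⟩ := Finset.mem_image.mp ha
    obtain ⟨q, hq, hvq⟩ := hGood pos
    have : ({q, pos} : Finset (Fin 6)) ⊆ Finset.univ.filter fun r => v r = a := by
      intro r hr
      rcases Finset.mem_insert.mp hr with rfl | hr
      · exact Finset.mem_filter.mpr ⟨Finset.mem_univ _, by rw [hvq, hpos]⟩
      · rw [Finset.mem_singleton.mp hr]
        exact Finset.mem_filter.mpr ⟨Finset.mem_univ _, hpos⟩
    calc 2 = ({q, pos} : Finset (Fin 6)).card := by rw [Finset.card_insert_of_notMem (by simpa using hq), Finset.card_singleton]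
      _ ≤ _ := Finset.card_le_card this
  have h6 : (Finset.univ : Finset (Fin 6)).card = 6 := by simp
  have : 2 * (Finset.univ.image v).card ≤ 6 := by
    calc 2 * (Finset.univ.image v).card = ∑ _a ∈ Finset.univ.image v, 2 := by
          rw [Finset.sum_const, smul_eq_mul, mul_comm]
      _ ≤ ∑ a ∈ Finset.univ.image v, (Finset.univ.filter fun q => v q = a).card :=
          Finset.sum_le_sum hfib
      _ = 6 := by rw [← hcard, h6]
  omega

lemma exists_factorization (n : ℕ) (v : Fin 6 → ℕ) (hv : ∀ q, v q ∈ Finset.range n)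
    (hcard : (Finset.univ.image v).card ≤ 3) :
    ∃ φ : Fin 6 → Fin 3, ∃ w ∈ Fintype.piFinset (fun _ : Fin 3 => Finset.range n),
      v = w ∘ φ := by
  classical
  set l := (Finset.univ.image v).toList with hl
  have hlen : l.length ≤ 3 := by
    rw [hl, Finset.length_toList]; exact hcard
  have hn0 : v 0 ∈ Finset.range n := hv 0
  set w : Fin 3 → ℕ := fun m => l.getD m (v 0) with hw
  have hwmem : w ∈ Fintype.piFinset (fun _ : Fin 3 => Finset.range n) := by
    rw [Fintype.mem_piFinset]
    intro m
    by_cases h : (m : ℕ) < l.length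
    · rw [hw]; simp only
      rw [List.getD_eq_getElem _ _ h]
      have : l[(m:ℕ)] ∈ Finset.univ.image v := by
        rw [← Finset.mem_toList, ← hl]; exact List.getElem_mem h
      obtain ⟨q, -, hq⟩ := Finset.mem_image.mp this
      rw [← hq]; exact hv q
    · rw [hw]; simp only
      rw [List.getD_eq_default _ _ (Nat.le_of_not_lt h)]
      exact hn0
  have hmem : ∀ q, v q ∈ l := fun q => by
    rw [hl, Finset.mem_toList]; exact Finset.mem_image_of_mem v (Finset.mem_univ q)
  refine ⟨fun q => ⟨l.idxOf (v q), lt_of_lt_of_le (List.idxOf_lt_length_iff.mpr (hmem q)) hlen⟩,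
    w, hwmem, funext fun q => ?_⟩
  have hidx : l.idxOf (v q) < l.length := List.idxOf_lt_length_iff.mpr (hmem q)
  show v q = w _
  rw [hw]; simp only [Function.comp]
  rw [List.getD_eq_getElem _ _ hidx, List.getElem_idxOf hidx]

lemma card_bad_le (n : ℕ) (B : Finset (Fin 6 → ℕ))
    (hB : B = (Finset.univ : Finset (Fin 6 → Fin 3)).biUnion
      (fun φ => (Fintype.piFinset (fun _ : Fin 3 => Finset.range n)).image
        (fun w => w ∘ φ))) :
    B.card ≤ 729 * n ^ 3 := by
  classical
  rw [hB]
  calc ((Finset.univ : Finset (Fin 6 → Fin 3)).biUnion _).card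
      ≤ ∑ φ : Fin 6 → Fin 3, ((Fintype.piFinset (fun _ : Fin 3 => Finset.range n)).image
        (fun w => w ∘ φ)).card := Finset.card_biUnion_le
    _ ≤ ∑ _φ : Fin 6 → Fin 3, n ^ 3 := by
        apply Finset.sum_le_sum
        intro φ _
        calc _ ≤ (Fintype.piFinset (fun _ : Fin 3 => Finset.range n)).card :=
              Finset.card_image_le
          _ = n ^ 3 := by
              rw [Fintype.card_piFinset]
              simp [Finset.card_range]
    _ = 729 * n ^ 3 := by
        rw [Finset.sum_const, smul_eq_mul, Finset.card_univ, Fintype.card_fun]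
        norm_num



lemma vanish_any (hF : Measurable F) (h0 : ∀ x, 0 ≤ F x) (h1 : ∀ x, F x ≤ 1)
    (hμ : ∀ x : ℝ, (μ (Set.Iic x)).toReal = F x)
    (X : ℕ → Ω → ℝ) (hmeas : ∀ i, Measurable (X i))
    (hindep : iIndepFun X P)
    (hdist : ∀ i, Measure.map (X i) P = μ)
    (i j k i' j' k' : ℕ) (pos : Fin 6)
    (hpos : ∀ q : Fin 6, q ≠ pos → (![i,j,k,i',j',k'] : Fin 6 → ℕ) q ≠ ![i,j,k,i',j',k'] pos) :
    ∫ ω, Af F μ X i j k ω * Af F μ X i' j' k' ω ∂P = 0 := by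
  have hswap : (fun ω => Af F μ X i j k ω * Af F μ X i' j' k' ω)
      = fun ω => Af F μ X i' j' k' ω * Af F μ X i j k ω := funext fun ω => mul_comm _ _
  fin_cases pos
  · -- i single
    have e1 : j ≠ i := by simpa using hpos 1 (by decide)
    have e2 : k ≠ i := by simpa using hpos 2 (by decide)
    have e3 : i' ≠ i := by simpa using hpos 3 (by decide)
    have e4 : j' ≠ i := by simpa using hpos 4 (by decide)
    have e5 : k' ≠ i := by simpa using hpos 5 (by decide)
    exact vanish_i P hF h0 h1 hμ X hmeas hindep hdist j k i' j' k' i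
      e1.symm e2.symm e3.symm e4.symm e5.symm
  · -- j single
    have e1 : i ≠ j := by simpa using hpos 0 (by decide)
    have e2 : k ≠ j := by simpa using hpos 2 (by decide)
    have e3 : i' ≠ j := by simpa using hpos 3 (by decide)
    have e4 : j' ≠ j := by simpa using hpos 4 (by decide)
    have e5 : k' ≠ j := by simpa using hpos 5 (by decide)
    have : (fun ω => Af F μ X i j k ω * Af F μ X i' j' k' ω)
        = fun ω => Af F μ X j i k ω * Af F μ X i' j' k' ω :=
      funext fun ω => by rw [Af_symm]
    rw [this]
    exact vanish_i P hF h0 h1 hμ X hmeas hindep hdist i k i' j' k' j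
      e1.symm e2.symm e3.symm e4.symm e5.symm
  · -- k single
    have e1 : i ≠ k := by simpa using hpos 0 (by decide)
    have e2 : j ≠ k := by simpa using hpos 1 (by decide)
    have e3 : i' ≠ k := by simpa using hpos 3 (by decide)
    have e4 : j' ≠ k := by simpa using hpos 4 (by decide)
    have e5 : k' ≠ k := by simpa using hpos 5 (by decide)
    exact vanish_k P hF h0 h1 X hmeas hindep hdist i j i' j' k' k
      e1.symm e2.symm e3.symm e4.symm e5.symm
  · -- i' single
    have e1 : i ≠ i' := by simpa using hpos 0 (by decide)
    have e2 : j ≠ i' := by simpa using hpos 1 (by decide)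
    have e3 : k ≠ i' := by simpa using hpos 2 (by decide)
    have e4 : j' ≠ i' := by simpa using hpos 4 (by decide)
    have e5 : k' ≠ i' := by simpa using hpos 5 (by decide)
    rw [hswap]
    exact vanish_i P hF h0 h1 hμ X hmeas hindep hdist j' k' i j k i'
      e4.symm e5.symm e1.symm e2.symm e3.symm
  · -- j' single
    have e1 : i ≠ j' := by simpa using hpos 0 (by decide)
    have e2 : j ≠ j' := by simpa using hpos 1 (by decide)
    have e3 : k ≠ j' := by simpa using hpos 2 (by decide)
    have e4 : i' ≠ j' := by simpa using hpos 3 (by decide)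
    have e5 : k' ≠ j' := by simpa using hpos 5 (by decide)
    rw [hswap]
    have : (fun ω => Af F μ X i' j' k' ω * Af F μ X i j k ω)
        = fun ω => Af F μ X j' i' k' ω * Af F μ X i j k ω :=
      funext fun ω => by rw [Af_symm]
    rw [this]
    exact vanish_i P hF h0 h1 hμ X hmeas hindep hdist i' k' i j k j'
      e4.symm e5.symm e1.symm e2.symm e3.symm
  · -- k' single
    have e1 : i ≠ k' := by simpa using hpos 0 (by decide)
    have e2 : j ≠ k' := by simpa using hpos 1 (by decide)
    have e3 : k ≠ k' := by simpa using hpos 2 (by decide)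
    have e4 : i' ≠ k' := by simpa using hpos 3 (by decide)
    have e5 : j' ≠ k' := by simpa using hpos 4 (by decide)
    rw [hswap]
    exact vanish_k P hF h0 h1 X hmeas hindep hdist i' j' i j k k'
      e4.symm e5.symm e1.symm e2.symm e3.symm


lemma integrable_AfAf (hF : Measurable F) (h0 : ∀ x, 0 ≤ F x) (h1 : ∀ x, F x ≤ 1)
    (X : ℕ → Ω → ℝ) (hmeas : ∀ i, Measurable (X i)) (i j k i' j' k' : ℕ) :
    Integrable (fun ω => Af F μ X i j k ω * Af F μ X i' j' k' ω) P := by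
  apply Integrable.mono' (integrable_const (4:ℝ))
  · exact ((measurable_Af hF X hmeas i j k).mul
      (measurable_Af hF X hmeas i' j' k')).aestronglyMeasurable
  · refine Filter.Eventually.of_forall fun ω => ?_
    rw [Real.norm_eq_abs, abs_mul]
    have hb : |Af F μ X i j k ω| * |Af F μ X i' j' k' ω| ≤ 2 * 2 :=
      mul_le_mul (abs_Af_le hF h0 h1 X i j k ω) (abs_Af_le hF h0 h1 X i' j' k' ω) (abs_nonneg _) (by norm_num)
    linarith

lemma ES2_le (hF : Measurable F) (h0 : ∀ x, 0 ≤ F x) (h1 : ∀ x, F x ≤ 1)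
    (hμ : ∀ x : ℝ, (μ (Set.Iic x)).toReal = F x)
    (X : ℕ → Ω → ℝ) (hmeas : ∀ i, Measurable (X i))
    (hindep : iIndepFun X P)
    (hdist : ∀ i, Measure.map (X i) P = μ)
    (n : ℕ) :
    ∫ ω, (Sn F μ X n ω) ^ 2 ∂P ≤ 2916 * n ^ 3 := by
  classical
  set R := Finset.range n with hR
  set T : Finset (ℕ × ℕ × ℕ) := R ×ˢ (R ×ˢ R) with hT
  have hSn : ∀ ω, Sn F μ X n ω = ∑ t ∈ T, Af F μ X t.1 t.2.1 t.2.2 ω := by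
    intro ω
    rw [hT, Finset.sum_product]
    refine Finset.sum_congr rfl fun i _ => ?_
    rw [Finset.sum_product]
  have hsq : ∀ ω, (Sn F μ X n ω) ^ 2 =
      ∑ p ∈ T ×ˢ T, Af F μ X p.1.1 p.1.2.1 p.1.2.2 ω * Af F μ X p.2.1 p.2.2.1 p.2.2.2 ω := by
    intro ω
    rw [hSn ω, sq, Finset.sum_mul_sum]
    exact (Finset.sum_product (s := T) (t := T)
      (f := fun p => Af F μ X p.1.1 p.1.2.1 p.1.2.2 ω * Af F μ X p.2.1 p.2.2.1 p.2.2.2 ω)).symm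
  have step1 : ∫ ω, (Sn F μ X n ω) ^ 2 ∂P =
      ∑ p ∈ T ×ˢ T, ∫ ω, Af F μ X p.1.1 p.1.2.1 p.1.2.2 ω * Af F μ X p.2.1 p.2.2.1 p.2.2.2 ω ∂P := by
    rw [show (fun ω => (Sn F μ X n ω) ^ 2) = fun ω =>
      ∑ p ∈ T ×ˢ T, Af F μ X p.1.1 p.1.2.1 p.1.2.2 ω * Af F μ X p.2.1 p.2.2.1 p.2.2.2 ω
      from funext hsq]
    exact integral_finset_sum _ fun p _ => integrable_AfAf P hF h0 h1 X hmeas _ _ _ _ _ _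
  have step2 : ∑ p ∈ T ×ˢ T, ∫ ω, Af F μ X p.1.1 p.1.2.1 p.1.2.2 ω
        * Af F μ X p.2.1 p.2.2.1 p.2.2.2 ω ∂P
      = ∑ p ∈ (T ×ˢ T).filter Good, ∫ ω, Af F μ X p.1.1 p.1.2.1 p.1.2.2 ω
        * Af F μ X p.2.1 p.2.2.1 p.2.2.2 ω ∂P := by
    refine (Finset.sum_filter_of_ne ?_).symm
    intro p hp hne
    by_contra hbad
    simp only [Good] at hbad
    push_neg at hbad
    obtain ⟨pos, hpos⟩ := hbad
    exact hne (vanish_any P hF h0 h1 hμ X hmeas hindep hdist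
      p.1.1 p.1.2.1 p.1.2.2 p.2.1 p.2.2.1 p.2.2.2 pos hpos)
  set B : Finset (Fin 6 → ℕ) := (Finset.univ : Finset (Fin 6 → Fin 3)).biUnion
    (fun φ => (Fintype.piFinset (fun _ : Fin 3 => Finset.range n)).image (fun w => w ∘ φ))
    with hB
  have hmemrange : ∀ p ∈ T ×ˢ T, ∀ q : Fin 6, vec p q ∈ Finset.range n := by
    intro p hp q
    rw [Finset.mem_product] at hp
    obtain ⟨hp1, hp2⟩ := hp
    rw [hT, Finset.mem_product] at hp1 hp2
    obtain ⟨h11, h12⟩ := hp1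
    obtain ⟨h21, h22⟩ := hp2
    rw [Finset.mem_product] at h12 h22
    fin_cases q <;> simp only [vec, Matrix.cons_val_zero, Matrix.cons_val_one, Matrix.head_cons,
      Matrix.cons_val_two, Matrix.tail_cons, Matrix.cons_val_three, Matrix.cons_val_four,
      Fin.isValue] <;> first
      | exact h11 | exact h12.1 | exact h12.2 | exact h21 | exact h22.1 | exact h22.2
  have hcardfilter : ((T ×ˢ T).filter Good).card ≤ 729 * n ^ 3 := by
    have hmaps : ∀ p ∈ (T ×ˢ T).filter Good, vec p ∈ B := by
      intro p hp
      rw [Finset.mem_filter] at hp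
      obtain ⟨hpT, hpG⟩ := hp
      obtain ⟨φ, w, hw, hfact⟩ := exists_factorization n (vec p) (hmemrange p hpT)
        (image_card_le_three (vec p) hpG)
      rw [hB]
      exact Finset.mem_biUnion.mpr ⟨φ, Finset.mem_univ _,
        Finset.mem_image.mpr ⟨w, hw, hfact.symm⟩⟩
    have hinj : Set.InjOn vec ((T ×ˢ T).filter Good : Finset _) := by
      intro p _ p' _ h
      have h0' := congrFun h 0
      have h1' := congrFun h 1
      have h2' := congrFun h 2
      have h3' := congrFun h 3
      have h4' := congrFun h 4
      have h5' := congrFun h 5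
      simp only [vec, Matrix.cons_val_zero, Matrix.cons_val_one, Matrix.head_cons,
        Matrix.cons_val_two, Matrix.tail_cons, Matrix.cons_val_three, Matrix.cons_val_four,
        Fin.isValue] at h0' h1' h2' h3' h4' h5'
      exact Prod.ext (Prod.ext h0' (Prod.ext h1' h2')) (Prod.ext h3' (Prod.ext h4' h5'))
    calc ((T ×ˢ T).filter Good).card ≤ B.card := Finset.card_le_card_of_injOn vec hmaps hinj
      _ ≤ 729 * n ^ 3 := card_bad_le n B hB
  calc ∫ ω, (Sn F μ X n ω) ^ 2 ∂P
      = ∑ p ∈ (T ×ˢ T).filter Good, ∫ ω, Af F μ X p.1.1 p.1.2.1 p.1.2.2 ω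
        * Af F μ X p.2.1 p.2.2.1 p.2.2.2 ω ∂P := by rw [step1, step2]
    _ ≤ ∑ p ∈ (T ×ˢ T).filter Good, 4 := by
        apply Finset.sum_le_sum
        intro p _
        have hb : ‖∫ ω, Af F μ X p.1.1 p.1.2.1 p.1.2.2 ω
            * Af F μ X p.2.1 p.2.2.1 p.2.2.2 ω ∂P‖ ≤ 4 * (P Set.univ).toReal := by
          apply norm_integral_le_of_norm_le_const
          refine Filter.Eventually.of_forall fun ω => ?_
          rw [Real.norm_eq_abs, abs_mul]
          have hbb : |Af F μ X p.1.1 p.1.2.1 p.1.2.2 ω| * |Af F μ X p.2.1 p.2.2.1 p.2.2.2 ω| ≤ 2 * 2 :=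
            mul_le_mul (abs_Af_le hF h0 h1 X _ _ _ ω) (abs_Af_le hF h0 h1 X _ _ _ ω) (abs_nonneg _) (by norm_num)
          linarith
        rw [measure_univ] at hb
        simp only [ENNReal.toReal_one, mul_one, Real.norm_eq_abs] at hb
        exact (le_abs_self _).trans hb
    _ = 4 * ((T ×ˢ T).filter Good).card := by rw [Finset.sum_const, nsmul_eq_mul, mul_comm]
    _ ≤ 4 * (729 * n ^ 3) := by
        have h4 : (((T ×ˢ T).filter Good).card : ℝ) ≤ 729 * (n:ℝ) ^ 3 := by
          exact_mod_cast hcardfilter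
        linarith
    _ = 2916 * n ^ 3 := by push_cast; ring

lemma abs_sqrt_sub_sqrt_le {a b : ℝ} (ha : 0 ≤ a) (hb : 0 ≤ b) :
    |Real.sqrt a - Real.sqrt b| ≤ Real.sqrt |a - b| := by
  have key : ∀ u v : ℝ, 0 ≤ u → 0 ≤ v → v ≤ u →
      Real.sqrt u - Real.sqrt v ≤ Real.sqrt (u - v) := by
    intro u v hu hv huv
    have h1 : Real.sqrt u ≤ Real.sqrt v + Real.sqrt (u - v) := by
      have h2 : u ≤ (Real.sqrt v + Real.sqrt (u - v)) ^ 2 := by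
        have e1 : Real.sqrt v ^ 2 = v := Real.sq_sqrt hv
        have e2 : Real.sqrt (u - v) ^ 2 = u - v := Real.sq_sqrt (by linarith)
        nlinarith [Real.sqrt_nonneg v, Real.sqrt_nonneg (u - v)]
      calc Real.sqrt u ≤ Real.sqrt ((Real.sqrt v + Real.sqrt (u - v)) ^ 2) :=
            Real.sqrt_le_sqrt h2
        _ = Real.sqrt v + Real.sqrt (u - v) := Real.sqrt_sq (by positivity)
    linarith
  rcases le_total b a with h | h
  · rw [abs_of_nonneg (sub_nonneg.mpr (Real.sqrt_le_sqrt h)),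
      abs_of_nonneg (sub_nonneg.mpr h)]
    exact key a b ha hb h
  · rw [abs_of_nonpos (sub_nonpos.mpr (Real.sqrt_le_sqrt h)),
      abs_of_nonpos (sub_nonpos.mpr h), neg_sub, neg_sub]
    exact key b a hb ha h

lemma measurable_Sn (hF : Measurable F) (X : ℕ → Ω → ℝ) (hmeas : ∀ i, Measurable (X i)) (n : ℕ) :
    Measurable (Sn F μ X n) := by
  unfold CvM.Sn
  apply Finset.measurable_sum
  intro i _
  apply Finset.measurable_sum
  intro j _
  apply Finset.measurable_sum
  intro k _
  exact measurable_Af hF X hmeas i j k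

lemma abs_Sn_le (hF : Measurable F) (h0 : ∀ x, 0 ≤ F x) (h1 : ∀ x, F x ≤ 1)
    (X : ℕ → Ω → ℝ) (n : ℕ) (ω : Ω) : |Sn F μ X n ω| ≤ 2 * n ^ 3 := by
  unfold CvM.Sn
  calc |∑ i ∈ Finset.range n, ∑ j ∈ Finset.range n, ∑ k ∈ Finset.range n, Af F μ X i j k ω|
      ≤ ∑ i ∈ Finset.range n, |∑ j ∈ Finset.range n, ∑ k ∈ Finset.range n, Af F μ X i j k ω| :=
        Finset.abs_sum_le_sum_abs _ _
    _ ≤ ∑ i ∈ Finset.range n, ∑ j ∈ Finset.range n, |∑ k ∈ Finset.range n, Af F μ X i j k ω| :=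
        Finset.sum_le_sum fun i _ => Finset.abs_sum_le_sum_abs _ _
    _ ≤ ∑ i ∈ Finset.range n, ∑ j ∈ Finset.range n, ∑ k ∈ Finset.range n, |Af F μ X i j k ω| :=
        Finset.sum_le_sum fun i _ => Finset.sum_le_sum fun j _ => Finset.abs_sum_le_sum_abs _ _
    _ ≤ ∑ _i ∈ Finset.range n, ∑ _j ∈ Finset.range n, ∑ _k ∈ Finset.range n, (2:ℝ) :=
        Finset.sum_le_sum fun i _ => Finset.sum_le_sum fun j _ => Finset.sum_le_sum fun k _ =>
          abs_Af_le hF h0 h1 X i j k ω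
    _ = 2 * n ^ 3 := by
        simp [Finset.sum_const, Finset.card_range, nsmul_eq_mul]
        ring

lemma key_ident (hF : Measurable F) (h0 : ∀ x, 0 ≤ F x) (h1 : ∀ x, F x ≤ 1)
    (X : ℕ → Ω → ℝ) (n : ℕ) (hn : (n:ℝ) ≠ 0) (ω : Ω) :
    (∑ k ∈ Finset.range n, (empCDF X n ω (X k ω) - F (X k ω)) ^ 2)
      - n * ∫ x, (empCDF X n ω x - F x) ^ 2 ∂μ
    = ((n:ℝ)⁻¹) ^ 2 * Sn F μ X n ω := by
  have hdiff : ∀ x, empCDF X n ω x - F x = (n:ℝ)⁻¹ * ∑ i ∈ Finset.range n, kerF F (X i ω) x := by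
    intro x
    have hs : ∑ i ∈ Finset.range n, kerF F (X i ω) x
        = (∑ i ∈ Finset.range n, if X i ω ≤ x then (1:ℝ) else 0) - n * F x := by
      unfold CvM.kerF
      rw [Finset.sum_sub_distrib, Finset.sum_const, Finset.card_range, nsmul_eq_mul]
    rw [hs, empCDF]
    field_simp
  have hsq : ∀ x, (empCDF X n ω x - F x) ^ 2 = ((n:ℝ)⁻¹) ^ 2 *
      ∑ i ∈ Finset.range n, ∑ j ∈ Finset.range n, kerF F (X i ω) x * kerF F (X j ω) x := by
    intro x
    rw [hdiff x, mul_pow, sq (∑ i ∈ Finset.range n, kerF F (X i ω) x), Finset.sum_mul_sum]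
  have part1 : ∑ k ∈ Finset.range n, (empCDF X n ω (X k ω) - F (X k ω)) ^ 2
      = ((n:ℝ)⁻¹) ^ 2 * ∑ i ∈ Finset.range n, ∑ j ∈ Finset.range n, ∑ k ∈ Finset.range n,
        kerF F (X i ω) (X k ω) * kerF F (X j ω) (X k ω) := by
    calc ∑ k ∈ Finset.range n, (empCDF X n ω (X k ω) - F (X k ω)) ^ 2
        = ∑ k ∈ Finset.range n, ((n:ℝ)⁻¹) ^ 2 * ∑ i ∈ Finset.range n, ∑ j ∈ Finset.range n,
            kerF F (X i ω) (X k ω) * kerF F (X j ω) (X k ω) :=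
          Finset.sum_congr rfl fun k _ => hsq (X k ω)
      _ = ((n:ℝ)⁻¹) ^ 2 * ∑ k ∈ Finset.range n, ∑ i ∈ Finset.range n, ∑ j ∈ Finset.range n,
            kerF F (X i ω) (X k ω) * kerF F (X j ω) (X k ω) := by rw [← Finset.mul_sum]
      _ = ((n:ℝ)⁻¹) ^ 2 * ∑ i ∈ Finset.range n, ∑ j ∈ Finset.range n, ∑ k ∈ Finset.range n,
            kerF F (X i ω) (X k ω) * kerF F (X j ω) (X k ω) := by
          congr 1
          rw [Finset.sum_comm]
          exact Finset.sum_congr rfl fun i _ => Finset.sum_comm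
  have part2 : ∫ x, (empCDF X n ω x - F x) ^ 2 ∂μ
      = ((n:ℝ)⁻¹) ^ 2 * ∑ i ∈ Finset.range n, ∑ j ∈ Finset.range n, Gf F μ (X i ω) (X j ω) := by
    rw [show (fun x => (empCDF X n ω x - F x) ^ 2) = fun x => ((n:ℝ)⁻¹) ^ 2 *
      ∑ i ∈ Finset.range n, ∑ j ∈ Finset.range n, kerF F (X i ω) x * kerF F (X j ω) x
      from funext hsq]
    rw [integral_const_mul]
    congr 1
    rw [integral_finset_sum _ fun i _ => integrable_finset_sum _ fun j _ =>
      integrable_kerker hF h0 h1 _ _]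
    exact Finset.sum_congr rfl fun i _ =>
      integral_finset_sum _ fun j _ => integrable_kerker hF h0 h1 _ _
  rw [part1, part2, Sn]
  rw [← mul_assoc, mul_comm (n:ℝ) (((n:ℝ)⁻¹) ^ 2), mul_assoc, ← mul_sub]
  congr 1
  rw [Finset.mul_sum]
  rw [← Finset.sum_sub_distrib]
  refine Finset.sum_congr rfl fun i _ => ?_
  rw [Finset.mul_sum, ← Finset.sum_sub_distrib]
  refine Finset.sum_congr rfl fun j _ => ?_
  have : (n:ℝ) * Gf F μ (X i ω) (X j ω) = ∑ _k ∈ Finset.range n, Gf F μ (X i ω) (X j ω) := by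
    rw [Finset.sum_const, Finset.card_range, nsmul_eq_mul]
  rw [this, ← Finset.sum_sub_distrib]
  rfl

end Main
end CvM

open CvM in
/-- Key step in Theorem (convergence of Hₙ to the Cramér–von Mises law):
√n dₙ(𝔽ₙ, F) − √n d(𝔽ₙ, F) → 0 in probability. -/
theorem empirical_dist_vs_population_dist
    (P : Measure Ω) [IsProbabilityMeasure P]
    (F : ℝ → ℝ) (hFcdf : IsCDF F)
    (μ : Measure ℝ) [IsProbabilityMeasure μ]
    (hμ : ∀ x : ℝ, (μ (Set.Iic x)).toReal = F x)
    (X : ℕ → Ω → ℝ) (hmeas : ∀ i, Measurable (X i))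
    (hindep : iIndepFun X P)
    (hdist : ∀ i, Measure.map (X i) P = μ) :
    ∀ δ : ℝ, 0 < δ →
      Tendsto
        (fun n : ℕ => P {ω | δ <
          |Real.sqrt n * empDist X n ω (empCDF X n ω) F -
            Real.sqrt n * Real.sqrt (∫ x, (empCDF X n ω x - F x) ^ 2 ∂μ)|})
        atTop (𝓝 0) := by
  intro δ hδ
  have hF : Measurable F := hFcdf.1.measurable
  have h0 : ∀ x, 0 ≤ F x := fun x => hμ x ▸ ENNReal.toReal_nonneg
  have h1 : ∀ x, F x ≤ 1 := by
    intro x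
    rw [← hμ x]
    have h := ENNReal.toReal_mono (by simp) (prob_le_one (μ := μ) (s := Set.Iic x))
    simpa using h
  have hbound : ∀ n : ℕ, 1 ≤ n →
      P {ω | δ < |Real.sqrt n * empDist X n ω (empCDF X n ω) F -
        Real.sqrt n * Real.sqrt (∫ x, (empCDF X n ω x - F x) ^ 2 ∂μ)|}
      ≤ ENNReal.ofReal (2916 / (δ ^ 4 * n)) := by
    intro n hn
    have hn0 : (n:ℝ) ≠ 0 := by positivity
    have hnpos : (0:ℝ) < n := by positivity
    set c : ℝ := ((n:ℝ)⁻¹) ^ 2 with hc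
    set A : Set Ω := {ω | δ ^ 4 ≤ (c * Sn F μ X n ω) ^ 2} with hA
    have hsub : {ω | δ < |Real.sqrt n * empDist X n ω (empCDF X n ω) F -
        Real.sqrt n * Real.sqrt (∫ x, (empCDF X n ω x - F x) ^ 2 ∂μ)|} ⊆ A := by
      intro ω hω
      simp only [Set.mem_setOf_eq] at hω
      set a : ℝ := ∑ k ∈ Finset.range n, (empCDF X n ω (X k ω) - F (X k ω)) ^ 2 with hadef
      set b : ℝ := n * ∫ x, (empCDF X n ω x - F x) ^ 2 ∂μ with hbdef
      have ha : 0 ≤ a := Finset.sum_nonneg fun k _ => sq_nonneg _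
      have hb : 0 ≤ b := mul_nonneg (le_of_lt hnpos)
        (integral_nonneg fun x => sq_nonneg _)
      have e1 : Real.sqrt n * empDist X n ω (empCDF X n ω) F = Real.sqrt a := by
        rw [empDist, ← Real.sqrt_mul (by positivity : (0:ℝ) ≤ (n:ℝ))]
        congr 1
        rw [← mul_assoc, mul_inv_cancel₀ hn0, one_mul]
      have e2 : Real.sqrt n * Real.sqrt (∫ x, (empCDF X n ω x - F x) ^ 2 ∂μ)
          = Real.sqrt b := (Real.sqrt_mul (by positivity) _).symm
      rw [e1, e2] at hω
      have h3 : δ < Real.sqrt |a - b| := lt_of_lt_of_le hω (abs_sqrt_sub_sqrt_le ha hb)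
      have h4 : δ ^ 2 < |a - b| := by
        have := pow_lt_pow_left₀ h3 (le_of_lt hδ) (two_ne_zero)
        rwa [Real.sq_sqrt (abs_nonneg _)] at this
      have h5 : a - b = c * Sn F μ X n ω := key_ident hF h0 h1 X n hn0 ω
      show δ ^ 4 ≤ (c * Sn F μ X n ω) ^ 2
      have h6 : (δ ^ 2) ^ 2 < |a - b| ^ 2 :=
        pow_lt_pow_left₀ h4 (by positivity) (two_ne_zero)
      rw [sq_abs, h5] at h6
      calc δ ^ 4 = (δ ^ 2) ^ 2 := by ring
        _ ≤ (c * Sn F μ X n ω) ^ 2 := le_of_lt h6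
    have hmeasA : Measurable (fun ω => (c * Sn F μ X n ω) ^ 2) :=
      ((measurable_const.mul (measurable_Sn hF X hmeas n)).pow measurable_const)
    have hintA : Integrable (fun ω => (c * Sn F μ X n ω) ^ 2) P := by
      apply Integrable.mono' (integrable_const (c ^ 2 * (2 * (n:ℝ) ^ 3) ^ 2))
      · exact hmeasA.aestronglyMeasurable
      · refine Filter.Eventually.of_forall fun ω => ?_
        rw [Real.norm_eq_abs, abs_of_nonneg (sq_nonneg _), mul_pow]
        have hs := abs_Sn_le (μ := μ) hF h0 h1 X n ω
        have : Sn F μ X n ω ^ 2 ≤ (2 * (n:ℝ) ^ 3) ^ 2 := by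
          rw [← sq_abs]
          exact pow_le_pow_left₀ (abs_nonneg _) hs 2
        have hc2 : (0:ℝ) ≤ c ^ 2 := sq_nonneg _
        nlinarith
    have hmar := mul_meas_ge_le_integral_of_nonneg
      (Filter.Eventually.of_forall fun ω => sq_nonneg (c * Sn F μ X n ω)) hintA (δ ^ 4)
    have hI : ∫ ω, (c * Sn F μ X n ω) ^ 2 ∂P ≤ 2916 / n := by
      have expand : (fun ω => (c * Sn F μ X n ω) ^ 2)
          = fun ω => c ^ 2 * (Sn F μ X n ω) ^ 2 := funext fun ω => by ring
      rw [expand, integral_const_mul]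
      have hle := ES2_le P hF h0 h1 hμ X hmeas hindep hdist n
      have hc2 : (0:ℝ) ≤ c ^ 2 := sq_nonneg _
      calc c ^ 2 * ∫ ω, (Sn F μ X n ω) ^ 2 ∂P ≤ c ^ 2 * (2916 * n ^ 3) :=
            mul_le_mul_of_nonneg_left hle hc2
        _ = 2916 / n := by
            rw [hc]
            field_simp
    have htoReal : (P A).toReal ≤ 2916 / (δ ^ 4 * n) := by
      have hAeq : A = {ω | δ ^ 4 ≤ (c * Sn F μ X n ω) ^ 2} := hA
      have : δ ^ 4 * (P A).toReal ≤ 2916 / n := by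
        calc δ ^ 4 * (P A).toReal ≤ ∫ ω, (c * Sn F μ X n ω) ^ 2 ∂P := by
              rw [hAeq]; exact hmar
          _ ≤ 2916 / n := hI
      have hδ4 : (0:ℝ) < δ ^ 4 := by positivity
      calc (P A).toReal ≤ (2916 / n) / δ ^ 4 := by
            rw [le_div_iff₀ hδ4]
            linarith [this]
        _ = 2916 / (δ ^ 4 * n) := by
            rw [div_div, mul_comm ((n:ℝ)) (δ ^ 4)]
    calc P {ω | δ < |Real.sqrt n * empDist X n ω (empCDF X n ω) F -
        Real.sqrt n * Real.sqrt (∫ x, (empCDF X n ω x - F x) ^ 2 ∂μ)|}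
        ≤ P A := measure_mono hsub
      _ = ENNReal.ofReal ((P A).toReal) := (ENNReal.ofReal_toReal (measure_ne_top P A)).symm
      _ ≤ ENNReal.ofReal (2916 / (δ ^ 4 * n)) := ENNReal.ofReal_le_ofReal htoReal
  have hlim : Tendsto (fun n : ℕ => ENNReal.ofReal (2916 / (δ ^ 4 * n))) atTop (𝓝 0) := by
    have hreal : Tendsto (fun n : ℕ => (2916 / δ ^ 4) / n) atTop (𝓝 0) :=
      tendsto_const_div_atTop_nhds_zero_nat _
    have heq : (fun n : ℕ => ENNReal.ofReal (2916 / (δ ^ 4 * (n:ℝ))))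
        = fun n : ℕ => ENNReal.ofReal ((2916 / δ ^ 4) / n) :=
      funext fun n => by rw [div_div]
    rw [heq, show (0:ℝ≥0∞) = ENNReal.ofReal 0 from (ENNReal.ofReal_zero).symm]
    exact ENNReal.tendsto_ofReal hreal
  apply tendsto_of_tendsto_of_tendsto_of_le_of_le' tendsto_const_nhds hlim
  · exact Filter.Eventually.of_forall fun n => zero_le
  · filter_upwards [eventually_ge_atTop 1] with n hn using hbound n hn
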